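/- Fix d ≥ 2 and p = (p₁,…,p_d) ∈ (0,1)^d. Let I = (I₁,…,I_d) be a {0,1}^d-valued random vector with P(I_m = 1) = p_m for each m, let U₀ = (U₀,₁,…,U₀,_d) and U₁ = (U₁,₁,…,U₁,_d) be vectors of i.i.d. standard uniform random variables on [0,1], with I, U₀, U₁ mutually independent, and set U_m = U₀,ₘ^{1-p_m}·U₁,ₘ^{I_m}. Then for all u = (u₁,…,u_d) ∈ [0,1]^d, P(U₁ ≤ u₁, …, U_d ≤ u_d) = Σ_{i∈{0,1}^d} P(I = i) · Π_{m=1}^{d} ( u_m^{1/(1-p_m)} - i_m·( u_m^{1/(1-p_m)} - u_m )/p_m ). -/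

import Mathlib

open MeasureTheory ProbabilityTheory Set

/-- The real value (`0` or `1`) of a Bernoulli outcome. -/
noncomputable def bval (b : Bool) : ℝ := if b then 1 else 0

noncomputable def μ01 : Measure ℝ := volume.restrict (Icc (0:ℝ) 1)

instance : IsProbabilityMeasure μ01 := ⟨by simp [μ01, Real.volume_Icc]⟩

lemma sliceIcc {a u : ℝ} (ha : 0 < a) (hu0 : 0 ≤ u) (hu1 : u ≤ 1) :
    {y : ℝ | y ^ a ≤ u} ∩ Icc 0 1 = Icc 0 (u ^ a⁻¹) := by
  ext y
  simp only [mem_inter_iff, mem_setOf_eq, mem_Icc]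
  constructor
  · rintro ⟨h, hy0, _⟩
    exact ⟨hy0, (Real.le_rpow_inv_iff_of_pos hy0 hu0 ha).2 h⟩
  · rintro ⟨hy0, hyc⟩
    have hc1 : u ^ a⁻¹ ≤ 1 := Real.rpow_le_one hu0 hu1 (by positivity)
    exact ⟨(Real.le_rpow_inv_iff_of_pos hy0 hu0 ha).1 hyc, hy0, hyc.trans hc1⟩

lemma meas_slice {a u : ℝ} (ha : 0 < a) (hu0 : 0 ≤ u) (hu1 : u ≤ 1) :
    μ01 {y : ℝ | y ^ a ≤ u} = ENNReal.ofReal (u ^ a⁻¹) := by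
  have hms : MeasurableSet {y : ℝ | y ^ a ≤ u} :=
    measurableSet_le (measurable_id.pow_const a) measurable_const
  rw [μ01, Measure.restrict_apply hms, sliceIcc ha hu0 hu1, Real.volume_Icc, sub_zero]

lemma key_pow {a u : ℝ} (ha : 0 < a) (ha1 : a < 1) (hu0 : 0 ≤ u) :
    u * (u ^ a⁻¹) ^ (1 - a) = u ^ a⁻¹ := by
  rcases eq_or_lt_of_le hu0 with h | h
  · simp [← h, Real.zero_rpow (by positivity : a⁻¹ ≠ (0:ℝ))]
  · have hane : a ≠ 0 := ha.ne'
    calc u * (u ^ a⁻¹) ^ (1 - a) = u * u ^ (a⁻¹ * (1 - a)) := by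
          rw [← Real.rpow_mul hu0]
      _ = u ^ (1 + a⁻¹ * (1 - a)) := by rw [Real.rpow_add h, Real.rpow_one]
      _ = u ^ a⁻¹ := by congr 1; field_simp; ring

lemma meas_prod_slice {p u : ℝ} (hp0 : 0 < p) (hp1 : p < 1) (hu0 : 0 ≤ u) (hu1 : u ≤ 1) :
    (μ01.prod μ01) {q : ℝ × ℝ | q.1 ^ (1 - p) * q.2 ≤ u}
      = ENNReal.ofReal (u ^ (1 - p)⁻¹ - (u ^ (1 - p)⁻¹ - u) / p) := by
  set a := 1 - p with ha_def
  have ha : 0 < a := by simp only [ha_def]; linarith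
  have ha1 : a < 1 := by simp only [ha_def]; linarith
  set c := u ^ a⁻¹ with hc_def
  have hc0 : 0 ≤ c := Real.rpow_nonneg hu0 _
  have hc1 : c ≤ 1 := Real.rpow_le_one hu0 hu1 (by positivity)
  have hmeas : MeasurableSet {q : ℝ × ℝ | q.1 ^ a * q.2 ≤ u} :=
    measurableSet_le ((measurable_fst.pow_const a).mul measurable_snd) measurable_const
  rw [Measure.prod_apply hmeas]
  have hinner : ∀ x ∈ Icc (0:ℝ) 1,
      μ01 (Prod.mk x ⁻¹' {q : ℝ × ℝ | q.1 ^ a * q.2 ≤ u})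
        = if x ≤ c then 1 else ENNReal.ofReal (u / x ^ a) := by
    intro x hx
    have hpre : Prod.mk x ⁻¹' {q : ℝ × ℝ | q.1 ^ a * q.2 ≤ u} = {y : ℝ | x ^ a * y ≤ u} := rfl
    rw [hpre]
    by_cases hxc : x ≤ c
    · rw [if_pos hxc]
      have hxa : x ^ a ≤ u := by
        calc x ^ a ≤ c ^ a := Real.rpow_le_rpow hx.1 hxc ha.le
        _ = u := Real.rpow_inv_rpow hu0 ha.ne'
      have hsub : Icc (0:ℝ) 1 ⊆ {y : ℝ | x ^ a * y ≤ u} := by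
        intro y hy
        have h1 : x ^ a * y ≤ x ^ a * 1 :=
          mul_le_mul_of_nonneg_left hy.2 (Real.rpow_nonneg hx.1 a)
        simpa using h1.trans (by simpa using hxa)
      have hms2 : MeasurableSet {y : ℝ | x ^ a * y ≤ u} :=
        measurableSet_le (measurable_const.mul measurable_id) measurable_const
      have : μ01 {y : ℝ | x ^ a * y ≤ u} = volume (Icc (0:ℝ) 1) := by
        rw [μ01, Measure.restrict_apply hms2, inter_eq_self_of_subset_right hsub]
      rw [this, Real.volume_Icc]; norm_num
    · rw [if_neg hxc]
      push_neg at hxc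
      have hx0 : 0 < x := lt_of_le_of_lt hc0 hxc
      have hxa0 : 0 < x ^ a := Real.rpow_pos_of_pos hx0 a
      have hua : u < x ^ a := by
        by_contra h
        push_neg at h
        exact absurd ((Real.le_rpow_inv_iff_of_pos hx0.le hu0 ha).2 h) (not_le.2 hxc)
      have hset : {y : ℝ | x ^ a * y ≤ u} = Iic (u / x ^ a) := by
        ext y; simp only [mem_setOf_eq, mem_Iic, le_div_iff₀ hxa0, mul_comm]
      have ht0 : 0 ≤ u / x ^ a := div_nonneg hu0 hxa0.le
      have ht1 : u / x ^ a ≤ 1 := by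
        rw [div_le_one hxa0]; exact hua.le
      have hIic : Iic (u / x ^ a) ∩ Icc (0:ℝ) 1 = Icc 0 (u / x ^ a) := by
        ext y; simp only [mem_inter_iff, mem_Iic, mem_Icc]
        exact ⟨fun ⟨h1, h2, _⟩ => ⟨h2, h1⟩, fun ⟨h1, h2⟩ => ⟨h2, h1, h2.trans ht1⟩⟩
      rw [hset, μ01, Measure.restrict_apply measurableSet_Iic, hIic, Real.volume_Icc, sub_zero]
  have hcu : c ≤ u := by
    rcases eq_or_lt_of_le hu0 with h | h
    · simp [hc_def, ← h, Real.zero_rpow (by positivity : a⁻¹ ≠ (0:ℝ))]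
    · have h1 : (1:ℝ) ≤ a⁻¹ := by
        rw [le_inv_comm₀ one_pos ha]; simpa using ha1.le
      calc c = u ^ a⁻¹ := hc_def
        _ ≤ u ^ (1:ℝ) := Real.rpow_le_rpow_of_exponent_ge h hu1 h1
        _ = u := Real.rpow_one u
  have hstep : (∫⁻ x, μ01 (Prod.mk x ⁻¹' {q : ℝ × ℝ | q.1 ^ a * q.2 ≤ u}) ∂μ01)
      = ∫⁻ x in Icc (0:ℝ) 1, (if x ≤ c then 1 else ENNReal.ofReal (u / x ^ a)) ∂volume := by
    rw [μ01]
    exact setLIntegral_congr_fun measurableSet_Icc hinner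
  have hdisj : Disjoint (Icc (0:ℝ) c) (Ioc c 1) := by
    rw [Set.disjoint_left]
    rintro x hx hx2
    exact absurd hx.2 (not_le.2 hx2.1)
  rw [hstep, ← Icc_union_Ioc_eq_Icc hc0 hc1, lintegral_union measurableSet_Ioc hdisj]
  have h1 : (∫⁻ x in Icc (0:ℝ) c, (if x ≤ c then 1 else ENNReal.ofReal (u / x ^ a)) ∂volume)
      = ENNReal.ofReal c := by
    rw [setLIntegral_congr_fun measurableSet_Icc (fun x hx => if_pos hx.2),
      setLIntegral_one, Real.volume_Icc, sub_zero]
  have hp' : -a + 1 = p := by rw [ha_def]; ring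
  have hkey : u * c ^ p = c := by
    have := key_pow ha ha1 hu0
    rwa [show (1:ℝ) - a = p by rw [ha_def]; ring, ← hc_def] at this
  have h2 : (∫⁻ x in Ioc c 1, (if x ≤ c then 1 else ENNReal.ofReal (u / x ^ a)) ∂volume)
      = ENNReal.ofReal ((u - c) / p) := by
    have hcong : ∀ x ∈ Ioc c 1, (if x ≤ c then 1 else ENNReal.ofReal (u / x ^ a))
        = ENNReal.ofReal (u * x ^ (-a)) := by
      intro x hx
      have hx0 : 0 < x := lt_of_le_of_lt hc0 hx.1
      rw [if_neg (not_le.2 hx.1), Real.rpow_neg hx0.le, div_eq_mul_inv]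
    rw [setLIntegral_congr_fun measurableSet_Ioc hcong]
    have hint : IntegrableOn (fun x : ℝ => u * x ^ (-a)) (Ioc c 1) volume := by
      have h := intervalIntegral.intervalIntegrable_rpow' (a := c) (b := 1)
        (show (-1:ℝ) < -a by linarith)
      rw [intervalIntegrable_iff_integrableOn_Ioc_of_le hc1] at h
      exact h.const_mul u
    have hnn : 0 ≤ᵐ[volume.restrict (Ioc c 1)] fun x : ℝ => u * x ^ (-a) := by
      refine (ae_restrict_iff' measurableSet_Ioc).2 (ae_of_all _ fun x hx => ?_)
      have hx0 : (0:ℝ) ≤ x := hc0.trans hx.1.le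
      positivity
    rw [← ofReal_integral_eq_lintegral_ofReal hint hnn]
    congr 1
    rw [← intervalIntegral.integral_of_le hc1, intervalIntegral.integral_const_mul,
      integral_rpow (Or.inl (show (-1:ℝ) < -a by linarith)), Real.one_rpow, hp']
    have hpne : p ≠ 0 := hp0.ne'
    field_simp
    nlinarith [hkey]
  rw [h1, h2, ← ENNReal.ofReal_add hc0 (div_nonneg (by linarith) hp0.le)]
  congr 1
  field_simp
  ring

lemma map_pair_eq_pi {Ω : Type*} [MeasurableSpace Ω] (P : Measure Ω) [IsProbabilityMeasure P]
    (d : ℕ) (U₀ U₁ : Fin d → Ω → ℝ)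
    (hU₀ : ∀ m, Measurable (U₀ m)) (hU₁ : ∀ m, Measurable (U₁ m))
    (hU₀law : ∀ m, P.map (U₀ m) = μ01) (hU₁law : ∀ m, P.map (U₁ m) = μ01)
    (hiid : iIndepFun (β := fun _ : Fin d ⊕ Fin d => ℝ)
      (Sum.elim U₀ U₁) P) :
    P.map (fun ω m => (U₀ m ω, U₁ m ω)) = Measure.pi (fun _ : Fin d => μ01.prod μ01) := by
  have hJ : Measurable (fun ω m => (U₀ m ω, U₁ m ω) : Ω → Fin d → ℝ × ℝ) :=
    measurable_pi_lambda _ fun m => (hU₀ m).prodMk (hU₁ m)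
  symm
  refine Measure.pi_eq_generateFrom (fun _ => generateFrom_prod) (fun _ => isPiSystem_prod)
    (fun _ => ⟨fun _ => univ ×ˢ univ,
      fun _ => mem_image2_of_mem MeasurableSet.univ MeasurableSet.univ,
      fun _ => by rw [univ_prod_univ]; exact measure_lt_top _ _,
      by simp [univ_prod_univ, iUnion_const]⟩) ?_
  intro s hs
  simp only [mem_image2, mem_setOf_eq] at hs
  choose s₀ hs₀ s₁ hs₁ hprod using hs
  have hpiset : MeasurableSet (univ.pi s) := by
    refine MeasurableSet.univ_pi fun m => ?_
    rw [← hprod m]; exact (hs₀ m).prod (hs₁ m)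
  rw [Measure.map_apply hJ hpiset]
  have hset : (fun ω m => (U₀ m ω, U₁ m ω)) ⁻¹' univ.pi s
      = ⋂ j : Fin d ⊕ Fin d, Sum.elim U₀ U₁ j ⁻¹' Sum.elim s₀ s₁ j := by
    ext ω
    simp only [mem_preimage, mem_univ_pi, mem_iInter, Sum.forall]
    constructor
    · intro h
      constructor
      · intro m; have := h m; rw [← hprod m] at this; exact this.1
      · intro m; have := h m; rw [← hprod m] at this; exact this.2
    · rintro ⟨h0, h1⟩ m
      rw [← hprod m]; exact ⟨h0 m, h1 m⟩
  rw [hset, hiid.meas_iInter (fun j => ?_), Fintype.prod_sum_type]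
  · have e0 : ∀ m, P (U₀ m ⁻¹' s₀ m) = μ01 (s₀ m) := fun m => by
      rw [← hU₀law m, Measure.map_apply (hU₀ m) (hs₀ m)]
    have e1 : ∀ m, P (U₁ m ⁻¹' s₁ m) = μ01 (s₁ m) := fun m => by
      rw [← hU₁law m, Measure.map_apply (hU₁ m) (hs₁ m)]
    simp only [Sum.elim_inl, Sum.elim_inr, e0, e1]
    rw [← Finset.prod_mul_distrib]
    refine Finset.prod_congr rfl fun m _ => ?_
    rw [← hprod m, Measure.prod_prod]
  · exact ⟨Sum.elim s₀ s₁ j, by cases j with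
      | inl m => exact hs₀ m
      | inr m => exact hs₁ m, rfl⟩

lemma fac_nonneg {pm um : ℝ} (hp0 : 0 < pm) (hp1 : pm < 1) (hu0 : 0 ≤ um) (hu1 : um ≤ 1)
    (b : Bool) :
    0 ≤ um ^ (1 - pm)⁻¹ - bval b * ((um ^ (1 - pm)⁻¹ - um) / pm) := by
  have ha : 0 < 1 - pm := by linarith
  have hc0 : 0 ≤ um ^ (1 - pm)⁻¹ := Real.rpow_nonneg hu0 _
  have hcu : um ^ (1 - pm)⁻¹ ≤ um := by
    rcases eq_or_lt_of_le hu0 with h | h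
    · simp [← h, Real.zero_rpow (by positivity : (1 - pm)⁻¹ ≠ (0:ℝ))]
    · have h1 : (1:ℝ) ≤ (1 - pm)⁻¹ := by rw [le_inv_comm₀ one_pos ha]; linarith
      calc um ^ (1 - pm)⁻¹ ≤ um ^ (1:ℝ) := Real.rpow_le_rpow_of_exponent_ge h hu1 h1
        _ = um := Real.rpow_one um
  cases b with
  | false => simpa [bval] using hc0
  | true =>
    have h2 : (um ^ (1 - pm)⁻¹ - um) / pm ≤ 0 :=
      div_nonpos_iff.mpr (Or.inr ⟨by linarith, hp0.le⟩)
    simp only [bval, if_pos]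
    linarith

/-- Fix `d ≥ 2` and `p ∈ (0,1)^d`.  Let `I` be a `{0,1}^d`-valued random vector with
`P(I_m = 1) = p_m`, let `U₀`, `U₁` be vectors of i.i.d. standard uniform random variables,
with `I, U₀, U₁` mutually independent, and set `U_m = U₀ₘ^(1-p_m) * U₁ₘ^(I_m)`.
Then the joint cdf of `U` at `u ∈ [0,1]^d` equals the GFGM copula
`Σ_{i∈{0,1}^d} P(I = i) Π_m (u_m^{1/(1-p_m)} - i_m (u_m^{1/(1-p_m)} - u_m)/p_m)`. -/
theorem gfgm_copula_of_stochastic_representation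
    {Ω : Type*} [MeasurableSpace Ω] (P : Measure Ω) [IsProbabilityMeasure P]
    (d : ℕ) (hd : 2 ≤ d) (p : Fin d → ℝ) (hp : ∀ m, p m ∈ Ioo (0 : ℝ) 1)
    (I : Ω → Fin d → Bool) (U₀ U₁ : Fin d → Ω → ℝ)
    (hI : Measurable I) (hU₀ : ∀ m, Measurable (U₀ m)) (hU₁ : ∀ m, Measurable (U₁ m))
    (hU₀law : ∀ m, P.map (U₀ m) = volume.restrict (Icc (0 : ℝ) 1))
    (hU₁law : ∀ m, P.map (U₁ m) = volume.restrict (Icc (0 : ℝ) 1))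
    (hImarg : ∀ m, P {ω | I ω m = true} = ENNReal.ofReal (p m))
    (hiid : iIndepFun (β := fun _ : Fin d ⊕ Fin d => ℝ)
      (Sum.elim U₀ U₁) P)
    (hIU : IndepFun I (fun ω j => Sum.elim U₀ U₁ j ω) P)
    (u : Fin d → ℝ) (hu : ∀ m, u m ∈ Icc (0 : ℝ) 1) :
    (P {ω | ∀ m, U₀ m ω ^ (1 - p m) * U₁ m ω ^ bval (I ω m) ≤ u m}).toReal
      = ∑ i : Fin d → Bool, (P {ω | I ω = i}).toReal *
          ∏ m, (u m ^ (1 - p m)⁻¹ - bval (i m) * ((u m ^ (1 - p m)⁻¹ - u m) / p m)) := by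

  classical
  have hp0 : ∀ m, 0 < p m := fun m => (hp m).1
  have hp1 : ∀ m, p m < 1 := fun m => (hp m).2
  set J : Ω → Fin d → ℝ × ℝ := fun ω m => (U₀ m ω, U₁ m ω) with hJdef
  have hJ : Measurable J := measurable_pi_lambda _ fun m => (hU₀ m).prodMk (hU₁ m)
  set G : (Fin d → Bool) → Fin d → Set (ℝ × ℝ) :=
    fun i m => {q : ℝ × ℝ | q.1 ^ (1 - p m) * q.2 ^ bval (i m) ≤ u m} with hG
  have hGmeas : ∀ i m, MeasurableSet (G i m) := fun i m =>
    measurableSet_le ((measurable_fst.pow_const _).mul (measurable_snd.pow_const _))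
      measurable_const
  have hpiG : ∀ i, MeasurableSet (univ.pi (G i)) := fun i =>
    MeasurableSet.univ_pi fun m => hGmeas i m
  have hIi : ∀ i : Fin d → Bool, MeasurableSet ({i} : Set (Fin d → Bool)) := by
    intro i
    have h : ({i} : Set (Fin d → Bool)) = univ.pi fun m => ({i m} : Set Bool) := by
      ext f
      simp [Set.mem_singleton_iff, funext_iff]
    rw [h]
    exact MeasurableSet.univ_pi fun m => measurableSet_singleton _
  -- decompose the event
  have hE : {ω | ∀ m, U₀ m ω ^ (1 - p m) * U₁ m ω ^ bval (I ω m) ≤ u m}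
      = ⋃ i : Fin d → Bool, (I ⁻¹' {i} ∩ J ⁻¹' univ.pi (G i)) := by
    ext ω
    simp only [mem_setOf_eq, mem_iUnion, mem_inter_iff, mem_preimage, mem_singleton_iff,
      mem_univ_pi, hG, hJdef, mem_setOf_eq]
    constructor
    · intro h
      exact ⟨I ω, rfl, h⟩
    · rintro ⟨i, hi, h⟩ m
      rw [hi]
      exact h m
  have hmeasP : ∀ i : Fin d → Bool, MeasurableSet (I ⁻¹' {i} ∩ J ⁻¹' univ.pi (G i)) :=
    fun i => (hI (hIi i)).inter (hJ (hpiG i))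
  have hdis : Pairwise (Function.onFun Disjoint
      fun i : Fin d → Bool => I ⁻¹' {i} ∩ J ⁻¹' univ.pi (G i)) := by
    intro i j hij
    exact Disjoint.mono inter_subset_left inter_subset_left
      (Disjoint.preimage I (by simpa using hij))
  rw [hE, measure_iUnion hdis hmeasP, tsum_fintype]
  -- independence and law
  have hmap : P.map J = Measure.pi (fun _ : Fin d => μ01.prod μ01) :=
    map_pair_eq_pi P d U₀ U₁ hU₀ hU₁ (fun m => hU₀law m) (fun m => hU₁law m) hiid
  have hterm : ∀ i : Fin d → Bool, P (I ⁻¹' {i} ∩ J ⁻¹' univ.pi (G i))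
      = P (I ⁻¹' {i}) * ∏ m, (μ01.prod μ01) (G i m) := by
    intro i
    set Φ : (Fin d ⊕ Fin d → ℝ) → Fin d → ℝ × ℝ := fun x m => (x (Sum.inl m), x (Sum.inr m))
      with hΦ
    have hΦm : Measurable Φ := measurable_pi_lambda _ fun m =>
      (measurable_pi_apply _).prodMk (measurable_pi_apply _)
    have hJeq : J ⁻¹' univ.pi (G i)
        = (fun ω j => Sum.elim U₀ U₁ j ω) ⁻¹' (Φ ⁻¹' univ.pi (G i)) := rfl
    rw [hJeq, indepFun_iff_measure_inter_preimage_eq_mul.1 hIU {i} (Φ ⁻¹' univ.pi (G i))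
      (hIi i) (hΦm (hpiG i)), ← hJeq]
    congr 1
    rw [← Measure.map_apply hJ (hpiG i), hmap, Measure.pi_pi]
  simp only [hterm]
  -- compute the factors
  have hfac : ∀ (i : Fin d → Bool) (m : Fin d), (μ01.prod μ01) (G i m)
      = ENNReal.ofReal (u m ^ (1 - p m)⁻¹ - bval (i m) * ((u m ^ (1 - p m)⁻¹ - u m) / p m)) := by
    intro i m
    have ha : 0 < 1 - p m := by linarith [hp1 m]
    cases hi : i m with
    | false =>
      have hset : G i m = {y : ℝ | y ^ (1 - p m) ≤ u m} ×ˢ (univ : Set ℝ) := by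
        ext q
        simp [hG, hi, bval, Real.rpow_zero]
      rw [hset, Measure.prod_prod, measure_univ, mul_one, meas_slice ha (hu m).1 (hu m).2]
      simp [bval]
    | true =>
      have hset : G i m = {q : ℝ × ℝ | q.1 ^ (1 - p m) * q.2 ≤ u m} := by
        ext q
        simp [hG, hi, bval, Real.rpow_one]
      rw [hset, meas_prod_slice (hp0 m) (hp1 m) (hu m).1 (hu m).2]
      simp [bval]
  simp only [hfac]
  -- convert to real
  rw [ENNReal.toReal_sum (fun i _ => ENNReal.mul_ne_top (measure_ne_top P _)
    (ENNReal.prod_lt_top (fun m _ => ENNReal.ofReal_lt_top)).ne)]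
  refine Finset.sum_congr rfl fun i _ => ?_
  rw [ENNReal.toReal_mul, ENNReal.toReal_prod]
  congr 1
  refine Finset.prod_congr rfl fun m _ => ?_
  exact ENNReal.toReal_ofReal (fac_nonneg (hp0 m) (hp1 m) (hu m).1 (hu m).2 (i m))
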